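/- arXiv:2006.06184 — 4 statements merged into one kernel-verified Lean document; each statement's English description precedes it below -/
import Mathlib

section
/- Let Σ⁺ be a one-sided countable Markov shift over a countable alphabet 𝒜 in which every 1-cylinder [a] is nonempty. Let D ∈ ℕ and let r : 𝒜 → ℕ≥1 be a function such that for every n ≥ 1 the fiber r⁻¹(n) is nonempty and has at most D elements. Suppose f, g : Σ⁺ → ℝ satisfy |f(x) − 2·log r(x₁)| ≤ C and |g(x) − 2·log r(x₁)| ≤ C for all x ∈ Σ⁺, where C > 0 is a constant. Then for all real numbers a, b ≥ 0 with a + b > 0 and all t ∈ ℝ, one has Z₁(−t(a·f + b·g)) < +∞ if and only if t > 1/(2(a+b)). -/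
open scoped ENNReal NNReal

/-- The one-sided countable Markov shift `Σ⁺` over the alphabet `A` with transition
matrix `T` (where `T a b` means the transition `a → b` is allowed). -/
abbrev MarkovShift {A : Type*} (T : A → A → Prop) : Type _ :=
  {x : ℕ → A // ∀ i, T (x i) (x (i + 1))}

/-- The partition function `Z₁(h) = Σ_{a ∈ 𝒜} exp (sup {h x : x ∈ [a]})`,
valued in `[0, +∞]`. -/
noncomputable def Z1 {A : Type*} (T : A → A → Prop) (h : MarkovShift T → ℝ) : ℝ≥0∞ :=
  ∑' c : A, ENNReal.ofReal (Real.exp (sSup (h '' {x : MarkovShift T | x.1 0 = c})))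

lemma aux_tsum_ofReal_lt_top_iff {x : ℕ → ℝ} (hx : ∀ n, 0 ≤ x n) :
    (∑' n, ENNReal.ofReal (x n)) < ⊤ ↔ Summable x := by
  rw [lt_top_iff_ne_top]
  have h1 : ∀ n, ENNReal.ofReal (x n) = ((Real.toNNReal (x n) : ℝ≥0) : ℝ≥0∞) := fun n => rfl
  rw [tsum_congr h1, ENNReal.tsum_coe_ne_top_iff_summable]
  constructor
  · intro hsum
    have := NNReal.summable_coe.2 hsum
    simpa only [Real.coe_toNNReal _ (hx _)] using this
  · intro hsum
    have : Summable (fun n => Real.toNNReal (x n)) := by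
      refine NNReal.summable_coe.1 ?_
      simpa only [Real.coe_toNNReal _ (hx _)] using hsum
    exact this

theorem stmt0 {A : Type*} [Countable A] (T : A → A → Prop)
    (hcyl : ∀ c : A, ∃ x : MarkovShift T, x.1 0 = c)
    (D : ℕ) (r : A → ℕ) (hr : ∀ c, 1 ≤ r c)
    (hfib_ne : ∀ n : ℕ, 1 ≤ n → ∃ c, r c = n)
    (hfib_fin : ∀ n : ℕ, 1 ≤ n → {c : A | r c = n}.Finite)
    (hfib_card : ∀ n : ℕ, 1 ≤ n → {c : A | r c = n}.ncard ≤ D)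
    (C : ℝ) (hC : 0 < C)
    (f g : MarkovShift T → ℝ)
    (hf : ∀ x, |f x - 2 * Real.log (r (x.1 0))| ≤ C)
    (hg : ∀ x, |g x - 2 * Real.log (r (x.1 0))| ≤ C)
    (a b : ℝ) (ha : 0 ≤ a) (hb : 0 ≤ b) (hab : 0 < a + b) (t : ℝ) :
    Z1 T (fun x => -t * (a * f x + b * g x)) < ⊤ ↔ 1 / (2 * (a + b)) < t := by
  classical
  set h : MarkovShift T → ℝ := fun x => -t * (a * f x + b * g x) with hh_def
  set s : ℝ := 2 * t * (a + b) with hs_def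
  set K : ℝ := |t| * ((a + b) * C) with hK_def
  have hrpos : ∀ c : A, (0 : ℝ) < (r c : ℝ) := by
    intro c
    exact_mod_cast Nat.lt_of_lt_of_le Nat.zero_lt_one (hr c)
  -- pointwise estimate on each cylinder
  have key : ∀ (c : A) (x : MarkovShift T), x.1 0 = c →
      |h x - (-(s * Real.log (r c)))| ≤ K := by
    intro c x hx
    have h1 := hf x
    have h2 := hg x
    rw [hx] at h1 h2
    have heq : h x - (-(s * Real.log (r c)))
        = -t * (a * (f x - 2 * Real.log (r c)) + b * (g x - 2 * Real.log (r c))) := by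
      simp only [hh_def, hs_def]; ring
    rw [heq, abs_mul, abs_neg]
    have habs : |a * (f x - 2 * Real.log (r c)) + b * (g x - 2 * Real.log (r c))|
        ≤ (a + b) * C := by
      calc |a * (f x - 2 * Real.log (r c)) + b * (g x - 2 * Real.log (r c))|
          ≤ |a * (f x - 2 * Real.log (r c))| + |b * (g x - 2 * Real.log (r c))| :=
            abs_add_le _ _
        _ = a * |f x - 2 * Real.log (r c)| + b * |g x - 2 * Real.log (r c)| := by
            rw [abs_mul, abs_mul, abs_of_nonneg ha, abs_of_nonneg hb]
        _ ≤ a * C + b * C := by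
            gcongr
        _ = (a + b) * C := by ring
    calc |t| * |a * (f x - 2 * Real.log (r c)) + b * (g x - 2 * Real.log (r c))|
        ≤ |t| * ((a + b) * C) := by gcongr
      _ = K := rfl
  -- bounds on the sup over each cylinder
  have Sbound : ∀ c : A,
      -(s * Real.log (r c)) - K ≤ sSup (h '' {x : MarkovShift T | x.1 0 = c}) ∧
      sSup (h '' {x : MarkovShift T | x.1 0 = c}) ≤ -(s * Real.log (r c)) + K := by
    intro c
    obtain ⟨x0, hx0⟩ := hcyl c
    have hmem : h x0 ∈ h '' {x : MarkovShift T | x.1 0 = c} := ⟨x0, hx0, rfl⟩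
    have hne : (h '' {x : MarkovShift T | x.1 0 = c}).Nonempty := ⟨h x0, hmem⟩
    have hub : ∀ y ∈ h '' {x : MarkovShift T | x.1 0 = c},
        y ≤ -(s * Real.log (r c)) + K := by
      rintro y ⟨x, hx, rfl⟩
      have := (abs_le.1 (key c x hx)).2
      linarith
    constructor
    · have hle := le_csSup ⟨_, fun y hy => hub y hy⟩ hmem
      have := (abs_le.1 (key c x0 hx0)).1
      linarith
    · exact csSup_le hne hub
  have hexpL : ∀ c : A, Real.exp (-(s * Real.log (r c))) = (r c : ℝ) ^ (-s) := by
    intro c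
    rw [Real.rpow_def_of_pos (hrpos c)]
    congr 1
    ring
  set P : ℝ≥0∞ := ∑' c : A, ENNReal.ofReal ((r c : ℝ) ^ (-s)) with hP_def
  -- Z1 comparison with P
  have hZ_le : Z1 T h ≤ ENNReal.ofReal (Real.exp K) * P := by
    rw [hP_def, ← ENNReal.tsum_mul_left]
    refine ENNReal.tsum_le_tsum fun c => ?_
    rw [← ENNReal.ofReal_mul (Real.exp_nonneg K)]
    apply ENNReal.ofReal_le_ofReal
    calc Real.exp (sSup (h '' {x : MarkovShift T | x.1 0 = c}))
        ≤ Real.exp (-(s * Real.log (r c)) + K) := Real.exp_le_exp.2 (Sbound c).2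
      _ = Real.exp K * ((r c : ℝ) ^ (-s)) := by
          rw [← hexpL c, ← Real.exp_add]; congr 1; ring
  have hZ_ge : ENNReal.ofReal (Real.exp (-K)) * P ≤ Z1 T h := by
    rw [hP_def, ← ENNReal.tsum_mul_left]
    refine ENNReal.tsum_le_tsum fun c => ?_
    rw [← ENNReal.ofReal_mul (Real.exp_nonneg (-K))]
    apply ENNReal.ofReal_le_ofReal
    calc Real.exp (-K) * ((r c : ℝ) ^ (-s))
        = Real.exp (-(s * Real.log (r c)) - K) := by
          rw [← hexpL c, ← Real.exp_add]; congr 1; ring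
      _ ≤ Real.exp (sSup (h '' {x : MarkovShift T | x.1 0 = c})) :=
          Real.exp_le_exp.2 (Sbound c).1
  have hPZ : Z1 T h < ⊤ ↔ P < ⊤ := by
    constructor
    · intro hz
      by_contra hp
      rw [not_lt, top_le_iff] at hp
      rw [hp, ENNReal.mul_top (by simp [Real.exp_pos])] at hZ_ge
      exact absurd (top_le_iff.1 hZ_ge) (by exact fun h' => hz.ne (by rw [h']))
    · intro hp
      exact lt_of_le_of_lt hZ_le (ENNReal.mul_lt_top ENNReal.ofReal_lt_top hp)
  -- P < ⊤ ↔ 1 < s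
  have hPiff : P < ⊤ ↔ 1 < s := by
    constructor
    · intro hp
      -- pick a point in each fiber
      obtain ⟨pick, pick_spec⟩ : ∃ pick : ℕ → A, ∀ n : ℕ, r (pick n) = n + 1 :=
        ⟨fun n => (hfib_ne (n + 1) (by omega)).choose,
         fun n => (hfib_ne (n + 1) (by omega)).choose_spec⟩
      have hinj : Function.Injective pick := by
        intro m n hmn
        have : m + 1 = n + 1 := by rw [← pick_spec m, ← pick_spec n, hmn]
        omega
      have hle : (∑' n : ℕ, ENNReal.ofReal (((n : ℝ) + 1) ^ (-s))) ≤ P := by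
        rw [hP_def]
        have := ENNReal.tsum_comp_le_tsum_of_injective hinj
          (fun c => ENNReal.ofReal ((r c : ℝ) ^ (-s)))
        refine le_trans (le_of_eq ?_) this
        refine tsum_congr fun n => ?_
        rw [pick_spec n]
        push_cast
        ring_nf
      have hfin : (∑' n : ℕ, ENNReal.ofReal (((n : ℝ) + 1) ^ (-s))) < ⊤ :=
        lt_of_le_of_lt hle hp
      have hsum : Summable (fun n : ℕ => ((n : ℝ) + 1) ^ (-s)) :=
        (aux_tsum_ofReal_lt_top_iff (fun n => Real.rpow_nonneg (by positivity) _)).1 hfin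
      have hsum' : Summable (fun n : ℕ => (n : ℝ) ^ (-s)) := by
        rw [← summable_nat_add_iff 1]
        convert hsum using 2 with n
        push_cast
        rfl
        push_cast
        rfl
      have := Real.summable_nat_rpow.1 hsum'
      linarith
    · intro hs1
      -- decompose P over fibers of r
      have hPdecomp : P = ∑' n : ℕ,
          ∑' _ : {c : A | r c = n}, ENNReal.ofReal ((n : ℝ) ^ (-s)) := by
        rw [hP_def, ← (Equiv.sigmaFiberEquiv r).tsum_eq
          (fun c => ENNReal.ofReal ((r c : ℝ) ^ (-s))), ENNReal.tsum_sigma']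
        refine tsum_congr fun n => tsum_congr fun p => ?_
        simp only [Equiv.sigmaFiberEquiv, Equiv.coe_fn_mk]
        rw [p.2]
      have hfc : ∀ n : ℕ, ({c : A | r c = n}.encard : ℝ≥0∞) ≤ (D : ℝ≥0∞) := by
        intro n
        rcases Nat.eq_zero_or_pos n with h0 | h1
        · have : {c : A | r c = n} = ∅ := by
            ext c; simp only [Set.mem_setOf_eq, Set.mem_empty_iff_false, iff_false]
            intro hc; have := hr c; omega
          simp [this]
        · have henc : {c : A | r c = n}.encard ≤ (D : ℕ∞) :=
            Set.encard_le_coe_iff_finite_ncard_le.2 ⟨hfib_fin n h1, hfib_card n h1⟩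
          exact_mod_cast ENat.toENNReal_le.2 henc
      have hle : P ≤ (D : ℝ≥0∞) * ∑' n : ℕ, ENNReal.ofReal ((n : ℝ) ^ (-s)) := by
        rw [hPdecomp, ← ENNReal.tsum_mul_left]
        refine ENNReal.tsum_le_tsum fun n => ?_
        rw [ENNReal.tsum_set_const]
        exact mul_le_mul_left (hfc n) _
      have hsum : Summable (fun n : ℕ => (n : ℝ) ^ (-s)) :=
        Real.summable_nat_rpow.2 (by linarith)
      have hfin : (∑' n : ℕ, ENNReal.ofReal ((n : ℝ) ^ (-s))) < ⊤ :=
        (aux_tsum_ofReal_lt_top_iff (fun n => Real.rpow_nonneg (Nat.cast_nonneg n) _)).2 hsum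
      exact lt_of_le_of_lt hle (ENNReal.mul_lt_top (by simp) hfin)
  rw [hPZ, hPiff]
  rw [hs_def, div_lt_iff₀ (by linarith : (0:ℝ) < 2 * (a + b))]
  constructor <;> intro h' <;> nlinarith
end

section
/- Let I be a countable set and let u, v : I → [0, ∞). For w : I → [0, ∞) define the critical exponent δ(w) = inf{t > 0 : Σ_{i∈I} e^{−t·w_i} < +∞} ∈ [0, +∞] (with inf ∅ = +∞). Suppose h₁ = δ(u) and h₂ = δ(v) both lie in (0, ∞). Then for all a, b > 0, δ(a·u + b·v) ≤ (h₁·h₂)/(b·h₁ + a·h₂). -/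
open scoped ENNReal

/-- The critical exponent `δ(w) = inf {t > 0 : Σ_{i ∈ I} e^{−t·wᵢ} < +∞}` of the
Dirichlet series of `w`, valued in `[0, +∞]` (with `inf ∅ = +∞`). -/
noncomputable def critExp {I : Type*} (w : I → ℝ) : ℝ≥0∞ :=
  sInf {t : ℝ≥0∞ | ∃ s : ℝ, 0 < s ∧ t = ENNReal.ofReal s ∧
    (∑' i : I, ENNReal.ofReal (Real.exp (-(s * w i)))) < ⊤}

lemma conv_above {I : Type*} (w : I → ℝ) (hw : ∀ i, 0 ≤ w i) (h : ℝ)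
    (hc : critExp w = ENNReal.ofReal h) {s : ℝ} (hs : h < s) (hs0 : 0 < s) :
    (∑' i : I, ENNReal.ofReal (Real.exp (-(s * w i)))) < ⊤ := by
  have hlt : critExp w < ENNReal.ofReal s := by
    rw [hc]; exact (ENNReal.ofReal_lt_ofReal_iff hs0).mpr hs
  obtain ⟨t, ht, hts⟩ := sInf_lt_iff.mp hlt
  obtain ⟨s₀, hs₀, rfl, hconv⟩ := ht
  have hs₀s : s₀ ≤ s := le_of_lt ((ENNReal.ofReal_lt_ofReal_iff hs0).mp hts)
  refine lt_of_le_of_lt (ENNReal.tsum_le_tsum fun i => ?_) hconv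
  apply ENNReal.ofReal_le_ofReal
  apply Real.exp_le_exp.mpr
  have := mul_le_mul_of_nonneg_right hs₀s (hw i)
  linarith

theorem stmt6 {I : Type*} [Countable I] (u v : I → ℝ)
    (hu : ∀ i, 0 ≤ u i) (hv : ∀ i, 0 ≤ v i)
    (h₁ h₂ : ℝ) (hh₁ : 0 < h₁) (hh₂ : 0 < h₂)
    (hcu : critExp u = ENNReal.ofReal h₁) (hcv : critExp v = ENNReal.ofReal h₂)
    (a b : ℝ) (ha : 0 < a) (hb : 0 < b) :
    critExp (fun i => a * u i + b * v i) ≤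
      ENNReal.ofReal (h₁ * h₂ / (b * h₁ + a * h₂)) := by
  set D : ℝ := b * h₁ + a * h₂ with hD
  have hDpos : 0 < D := by positivity
  set sc : ℝ := h₁ * h₂ / D with hsc
  have hscpos : 0 < sc := by positivity
  apply ENNReal.le_of_forall_pos_le_add
  intro ε hε _
  set s : ℝ := sc + ε with hsdef
  have hεR : (0:ℝ) < ε := hε
  have hspos : 0 < s := by positivity
  have key : (∑' i : I, ENNReal.ofReal (Real.exp (-(s * (a * u i + b * v i))))) < ⊤ := by
    set p : ℝ := s * D / h₂ with hp
    set q : ℝ := s * D / h₁ with hq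
    have hph : h₁ < p := by
      rw [hp]
      rw [lt_div_iff₀ hh₂]
      have : h₁ * h₂ = sc * D := by rw [hsc]; field_simp
      nlinarith
    have hqh : h₂ < q := by
      rw [hq]
      rw [lt_div_iff₀ hh₁]
      have : h₁ * h₂ = sc * D := by rw [hsc]; field_simp
      nlinarith
    have hppos : 0 < p := lt_trans hh₁ hph
    have hqpos : 0 < q := lt_trans hh₂ hqh
    have hconvu := conv_above u hu h₁ hcu hph hppos
    have hconvv := conv_above v hv h₂ hcv hqh hqpos
    refine lt_of_le_of_lt (ENNReal.tsum_le_tsum (fun i =>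
      (?_ : ENNReal.ofReal (Real.exp (-(s * (a * u i + b * v i)))) ≤
        ENNReal.ofReal (Real.exp (-(p * u i))) + ENNReal.ofReal (Real.exp (-(q * v i)))))) ?_
    · have hmin : min (p * u i) (q * v i) ≤ s * (a * u i + b * v i) := by
        have hθp : (a * h₂ / D) * p = s * a := by rw [hp]; field_simp
        have hθq : (b * h₁ / D) * q = s * b := by rw [hq]; field_simp
        have hθ1 : a * h₂ / D + b * h₁ / D = 1 := by field_simp; ring
        have h1 : 0 ≤ p * u i := mul_nonneg hppos.le (hu i)
        have h2 : 0 ≤ q * v i := mul_nonneg hqpos.le (hv i)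
        have hθa : 0 ≤ a * h₂ / D := by positivity
        have hθb : 0 ≤ b * h₁ / D := by positivity
        have e1 : (a * h₂ / D) * (p * u i) = s * a * u i := by
          rw [← hθp]; ring
        have e2 : (b * h₁ / D) * (q * v i) = s * b * v i := by
          rw [← hθq]; ring
        have hexpand : s * (a * u i + b * v i) = s * a * u i + s * b * v i := by ring
        clear_value D sc s p q
        rcases le_total (p * u i) (q * v i) with hle | hle
        · rw [min_eq_left hle]
          have hsum : (a * h₂ / D) * (p * u i) + (b * h₁ / D) * (p * u i) = p * u i := by
            have h' : (a * h₂ / D) * (p * u i) + (b * h₁ / D) * (p * u i)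
                = (a * h₂ / D + b * h₁ / D) * (p * u i) := by ring
            rw [h', hθ1, one_mul]
          linarith [mul_le_mul_of_nonneg_left hle hθb]
        · rw [min_eq_right hle]
          have hsum : (a * h₂ / D) * (q * v i) + (b * h₁ / D) * (q * v i) = q * v i := by
            have h' : (a * h₂ / D) * (q * v i) + (b * h₁ / D) * (q * v i)
                = (a * h₂ / D + b * h₁ / D) * (q * v i) := by ring
            rw [h', hθ1, one_mul]
          linarith [mul_le_mul_of_nonneg_left hle hθa]
      have hexp : Real.exp (-(s * (a * u i + b * v i))) ≤
          Real.exp (-(p * u i)) + Real.exp (-(q * v i)) := by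
        rcases min_cases (p * u i) (q * v i) with ⟨hm, _⟩ | ⟨hm, _⟩
        · have : Real.exp (-(s * (a * u i + b * v i))) ≤ Real.exp (-(p * u i)) := by
            apply Real.exp_le_exp.mpr; rw [hm] at hmin; linarith
          linarith [Real.exp_pos (-(q * v i))]
        · have : Real.exp (-(s * (a * u i + b * v i))) ≤ Real.exp (-(q * v i)) := by
            apply Real.exp_le_exp.mpr; rw [hm] at hmin; linarith
          linarith [Real.exp_pos (-(p * u i))]
      exact le_trans (ENNReal.ofReal_le_ofReal hexp) (ENNReal.ofReal_add_le)
    · rw [ENNReal.tsum_add]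
      exact ENNReal.add_lt_top.mpr ⟨hconvu, hconvv⟩
  calc critExp (fun i => a * u i + b * v i)
      ≤ ENNReal.ofReal s := sInf_le ⟨s, hspos, rfl, key⟩
    _ = ENNReal.ofReal sc + ε := by
        rw [hsdef, ENNReal.ofReal_add hscpos.le hεR.le, ENNReal.ofReal_coe_nnreal]
end

section
/- Let λ ∈ ℂ with |λ| > 1 and let a, b, c, d ∈ ℂ with a·d − b·c = 1 and a ≠ 0. Let A be the 2×2 complex matrix with diagonal entries λ and λ⁻¹ and zero off-diagonal entries, and let B be the 2×2 complex matrix with rows (a, b) and (c, d). Then there exist K > 0 and N ∈ ℕ such that for every n ≥ N the matrix AⁿB has an eigenvalue μ_n with |μ_n| > 1, and |log|μ_n| − (n·log|λ| + log|a| + Re(λ^{−2n}·(a·d − 1)/a²))| ≤ K·|λ|^{−4n}. -/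
open Matrix Polynomial

lemma charpoly_two' (M : Matrix (Fin 2) (Fin 2) ℂ) :
    M.charpoly = X ^ 2 - C (M.trace) * X + C M.det := by
  rw [Matrix.charpoly, Matrix.det_fin_two, Matrix.trace_fin_two, Matrix.det_fin_two]
  rw [charmatrix_apply_eq, charmatrix_apply_eq, charmatrix_apply_ne _ _ _ (by decide),
    charmatrix_apply_ne _ _ _ (by decide)]
  ring_nf
  simp [C_mul, C_add]
  ring

lemma pow_diag' (lam : ℂ) (n : ℕ) :
    (!![lam, 0; 0, lam⁻¹] : Matrix (Fin 2) (Fin 2) ℂ) ^ n = !![lam ^ n, 0; 0, lam⁻¹ ^ n] := by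
  induction n with
  | zero => simp [Matrix.one_fin_two]
  | succ k ih => rw [pow_succ, ih, Matrix.mul_fin_two]; ring_nf

lemma log_abs_one_add' (w : ℂ) (hw : ‖w‖ ≤ 1/2) :
    |Real.log (‖1 + w‖) - w.re| ≤ ‖w‖ ^ 2 := by
  have hw1 : ‖w‖ < 1 := by linarith
  have hne : (1 : ℂ) + w ≠ 0 := by
    intro h
    have : ‖w‖ = 1 := by
      have : w = -1 := by linear_combination h
      simp [this]
    linarith
  rw [(Complex.log_re _).symm]
  have h2 : |(Complex.log (1 + w) - w).re| ≤ ‖Complex.log (1 + w) - w‖ :=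
    Complex.abs_re_le_norm _
  have h3 := Complex.norm_log_one_add_sub_self_le hw1
  have h4 : ‖w‖ ^ 2 * (1 - ‖w‖)⁻¹ / 2 ≤ ‖w‖ ^ 2 := by
    have : (1 - ‖w‖)⁻¹ ≤ 2 := by
      rw [inv_le_comm₀ (by linarith) (by norm_num)]
      linarith
    nlinarith [norm_nonneg w, sq_nonneg ‖w‖]
  have hre : (Complex.log (1 + w) - w).re = (Complex.log (1 + w)).re - w.re := by simp
  rw [← hre]
  calc |(Complex.log (1 + w) - w).re| ≤ ‖Complex.log (1+w) - w‖ := h2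
    _ ≤ ‖w‖ ^ 2 * (1 - ‖w‖)⁻¹ / 2 := h3
    _ ≤ ‖w‖ ^ 2 := h4
    _ = ‖w‖ ^ 2 := rfl

set_option maxHeartbeats 1000000 in
theorem stmt9 (lam : ℂ) (hlam : 1 < ‖lam‖)
    (a b c d : ℂ) (hdet : a * d - b * c = 1) (ha : a ≠ 0) :
    ∃ K : ℝ, 0 < K ∧ ∃ N : ℕ, ∀ n : ℕ, N ≤ n →
      ∃ μ : ℂ,
        (Matrix.charpoly ((!![lam, 0; 0, lam⁻¹] : Matrix (Fin 2) (Fin 2) ℂ) ^ n *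
          !![a, b; c, d])).IsRoot μ ∧
        1 < ‖μ‖ ∧
        |Real.log (‖μ‖) -
            ((n : ℝ) * Real.log (‖lam‖) + Real.log (‖a‖) +
              (lam ^ (-(2 * (n : ℤ))) * (a * d - 1) / a ^ 2).re)| ≤
          K * ‖lam‖ ^ (-(4 * (n : ℤ))) := by
  have hl0 : lam ≠ 0 := by
    intro h; rw [h] at hlam; simp at hlam; linarith
  have ha0 : (0:ℝ) < ‖a‖ := norm_pos_iff.mpr ha
  set r : ℝ := ‖lam‖ with hr_def
  set Ca : ℝ := ‖a‖ with hCa_def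
  set Cd : ℝ := ‖d‖ with hCd_def
  set Cc : ℝ := Cd + 4 / Ca with hCc_def
  have hCc0 : 0 < Cc := by
    have : 0 ≤ Cd := norm_nonneg d
    have : 0 < 4 / Ca := by positivity
    unfold Cc; linarith [norm_nonneg d]
  refine ⟨Cc^2 / Ca^2 + 4 * Cc / Ca^3 + 1, by positivity, ?_⟩
  obtain ⟨N, hN⟩ := pow_unbounded_of_one_lt (max (8 / Ca) (2 * Cc / Ca)) hlam
  refine ⟨N, fun n hn => ?_⟩
  -- basic size facts
  set L : ℝ := r ^ n with hL_def
  have hr1 : (1:ℝ) < r := hlam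
  have hL1 : 1 ≤ L := one_le_pow₀ (le_of_lt hr1)
  have hL0 : 0 < L := by linarith
  have hLbig : max (8 / Ca) (2 * Cc / Ca) < L := by
    calc max (8 / Ca) (2 * Cc / Ca) < r ^ N := hN
      _ ≤ r ^ n := pow_le_pow_right₀ (le_of_lt hr1) hn
  have hL8 : 8 / Ca ≤ L := le_of_lt (lt_of_le_of_lt (le_max_left _ _) hLbig)
  have hLC : 2 * Cc / Ca ≤ L := le_of_lt (lt_of_le_of_lt (le_max_right _ _) hLbig)
  have hL8' : 8 ≤ L * Ca := by
    rw [div_le_iff₀ ha0] at hL8; linarith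
  have hLC' : 2 * Cc ≤ L^2 * Ca := by
    rw [div_le_iff₀ ha0] at hLC
    nlinarith
  -- trace and determinant
  set P : ℂ := lam ^ n with hP_def
  have hP0 : P ≠ 0 := pow_ne_zero _ hl0
  have hPabs : ‖P‖ = L := by
    rw [hP_def, norm_pow]
  have hPiabs : ‖P⁻¹‖ = L⁻¹ := by rw [norm_inv, hPabs]
  set t : ℂ := P * a + P⁻¹ * d with ht_def
  have hM : ((!![lam, 0; 0, lam⁻¹] : Matrix (Fin 2) (Fin 2) ℂ) ^ n * !![a, b; c, d])
      = !![P * a, P * b; P⁻¹ * c, P⁻¹ * d] := by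
    rw [pow_diag', Matrix.mul_fin_two]
    rw [hP_def, inv_pow]
    ring_nf
  have htr : (!![P * a, P * b; P⁻¹ * c, P⁻¹ * d] : Matrix (Fin 2) (Fin 2) ℂ).trace = t := by
    rw [Matrix.trace_fin_two_of]
  have hPP : P * P⁻¹ = 1 := mul_inv_cancel₀ hP0
  have hdt : (!![P * a, P * b; P⁻¹ * c, P⁻¹ * d] : Matrix (Fin 2) (Fin 2) ℂ).det = 1 := by
    rw [Matrix.det_fin_two_of]
    linear_combination (a * d - b * c) * hPP + hdet
  -- bound on |t|
  have htabs : L * Ca / 2 ≤ ‖t‖ := by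
    have h1 : ‖P * a‖ = L * Ca := by rw [norm_mul, hPabs]
    have h2 : ‖P⁻¹ * d‖ = L⁻¹ * Cd := by rw [norm_mul, hPiabs]
    have h4 : ‖P * a‖ ≤ ‖t‖ + ‖P⁻¹ * d‖ := by
      calc ‖P * a‖ = ‖t + -(P⁻¹ * d)‖ := by rw [ht_def]; ring_nf
        _ ≤ ‖t‖ + ‖-(P⁻¹ * d)‖ := norm_add_le _ _
        _ = ‖t‖ + ‖P⁻¹ * d‖ := by rw [norm_neg]
    rw [h1, h2] at h4
    have hCdCc : Cd ≤ Cc := by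
      have : 0 < 4 / Ca := by positivity
      rw [hCc_def]; linarith
    have hinv : L⁻¹ * Cd ≤ L * Ca / 2 := by
      rw [inv_mul_le_iff₀ hL0]
      nlinarith [norm_nonneg d]
    linarith
  have ht4 : (4:ℝ) ≤ ‖t‖ := by
    nlinarith
  -- construct the root
  obtain ⟨s, hs⟩ := IsAlgClosed.exists_pow_nat_eq (k := ℂ) (t ^ 2 - 4) (by norm_num : 0 < 2)
  have key : ∀ μ μ' : ℂ, μ + μ' = t → μ * μ' = 1 → ‖μ'‖ ≤ ‖μ‖ →
      ∃ μ₀ : ℂ,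
        (Matrix.charpoly ((!![lam, 0; 0, lam⁻¹] : Matrix (Fin 2) (Fin 2) ℂ) ^ n *
          !![a, b; c, d])).IsRoot μ₀ ∧
        1 < ‖μ₀‖ ∧
        |Real.log (‖μ₀‖) -
            ((n : ℝ) * Real.log (‖lam‖) + Real.log (‖a‖) +
              (lam ^ (-(2 * (n : ℤ))) * (a * d - 1) / a ^ 2).re)| ≤
          (Cc^2 / Ca^2 + 4 * Cc / Ca^3 + 1) * ‖lam‖ ^ (-(4 * (n : ℤ))) := by
    intro μ μ' hsum hprod hle
    have hμ0 : μ ≠ 0 := by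
      intro h; rw [h, zero_mul] at hprod; exact one_ne_zero hprod.symm
    have habs1 : ‖μ‖ * ‖μ'‖ = 1 := by
      rw [← norm_mul, hprod, norm_one]
    have hge1 : 1 ≤ ‖μ‖ := by
      nlinarith [norm_nonneg μ, norm_nonneg μ']
    have hμ'le : ‖μ'‖ ≤ 1 := by
      nlinarith [norm_nonneg μ']
    have hμlow : ‖t‖ - 1 ≤ ‖μ‖ := by
      have : ‖t‖ ≤ ‖μ‖ + ‖μ'‖ := by
        rw [← hsum]; exact norm_add_le _ _
      linarith
    have hμ3 : 3 ≤ ‖μ‖ := by linarith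
    have hμLa : L * Ca / 4 ≤ ‖μ‖ := by
      linarith
    -- root of quadratic
    have heq : μ ^ 2 - t * μ + 1 = 0 := by
      linear_combination μ * hsum - hprod
    refine ⟨μ, ?_, by linarith, ?_⟩
    · rw [hM, Polynomial.IsRoot, charpoly_two', htr, hdt]
      simp only [Polynomial.eval_add, Polynomial.eval_sub, Polynomial.eval_mul,
        Polynomial.eval_pow, Polynomial.eval_X, Polynomial.eval_C]
      linear_combination heq
    · -- analytic estimate
      have hsum' : μ + μ' = P * a + P⁻¹ * d := by rw [hsum]
      have hPa0 : P * a ≠ 0 := mul_ne_zero hP0 ha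
      set u : ℂ := μ / (P * a) - 1 with hu_def
      have h1u : (1 : ℂ) + u = μ / (P * a) := by rw [hu_def]; ring
      have habs1u : ‖1 + u‖ = ‖μ‖ / (L * Ca) := by
        rw [h1u, norm_div, norm_mul, hPabs]
      have hμpos : (0:ℝ) < ‖μ‖ := by linarith
      have hmulpos : (0:ℝ) < L * Ca := by positivity
      have h1upos : (0:ℝ) < ‖1 + u‖ := by
        rw [habs1u]; positivity
      have hlogμ : Real.log (‖μ‖)
          = (n : ℝ) * Real.log r + Real.log Ca + Real.log (‖1 + u‖) := by
        rw [habs1u, Real.log_div (ne_of_gt hμpos) (ne_of_gt hmulpos),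
          Real.log_mul (ne_of_gt hL0) (ne_of_gt ha0), hL_def, Real.log_pow]
        push_cast; ring
      -- identity for u
      have hu2 : u * (P * a) = P⁻¹ * d - μ' := by
        have h1 : u * (P * a) = μ - P * a := by
          rw [hu_def]; field_simp
        rw [h1]; linear_combination hsum'
      -- |μ'| ≤ 4 / (L * Ca)
      have hμ' : ‖μ'‖ ≤ 4 / (L * Ca) := by
        rw [le_div_iff₀ hmulpos]
        nlinarith [norm_nonneg μ']
      -- bound |u|
      have habs_u : ‖u‖ ≤ Cc / (L ^ 2 * Ca) := by
        have h2 : ‖u‖ * (L * Ca) = ‖P⁻¹ * d - μ'‖ := by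
          rw [← hu2, norm_mul, norm_mul, hPabs]
        have h3 : ‖P⁻¹ * d - μ'‖ ≤ Cd / L + 4 / (L * Ca) := by
          calc ‖P⁻¹ * d - μ'‖ ≤ ‖P⁻¹ * d‖ + ‖μ'‖ :=
                norm_sub_le _ _
            _ ≤ Cd / L + 4 / (L * Ca) := by
                rw [norm_mul, hPiabs]
                have : L⁻¹ * Cd = Cd / L := by ring
                rw [this]
                exact add_le_add_right hμ' _
        have h4 : ‖u‖ * (L * Ca) ≤ Cd / L + 4 / (L * Ca) := by
          rw [h2]; exact h3
        rw [le_div_iff₀ (by positivity)]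
        have hCd4 : Cd / L + 4 / (L * Ca) = Cc / L := by
          rw [hCc_def]; field_simp
        rw [hCd4] at h4
        calc ‖u‖ * (L ^ 2 * Ca) = (‖u‖ * (L * Ca)) * L := by ring
          _ ≤ (Cc / L) * L := by
              apply mul_le_mul_of_nonneg_right h4 (le_of_lt hL0)
          _ = Cc := by field_simp
      have hu_half : ‖u‖ ≤ 1 / 2 := by
        calc ‖u‖ ≤ Cc / (L ^ 2 * Ca) := habs_u
          _ ≤ 1 / 2 := by
            rw [div_le_iff₀ (by positivity)]
            clear_value Cc L Ca
            linarith [hLC']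
      have E1 := log_abs_one_add' u hu_half
      -- power rewrites
      have hv : lam ^ (-(2 * (n : ℤ))) = (P ^ 2)⁻¹ := by
        rw [_root_.zpow_neg, hP_def, ← pow_mul]
        norm_cast
        rw [mul_comm 2 n]
      have hL4 : ‖lam‖ ^ (-(4 * (n : ℤ))) = (L ^ 4)⁻¹ := by
        rw [_root_.zpow_neg, ← hr_def, hL_def, ← pow_mul]
        norm_cast
        rw [mul_comm 4 n]
      set v : ℂ := lam ^ (-(2 * (n : ℤ))) * (a * d - 1) / a ^ 2 with hv_def
      have hclear : (u - v) * (P ^ 2 * a ^ 2) = μ' * (P⁻¹ * d - μ') := by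
        have hv2 : v * a ^ 2 = (P⁻¹) ^ 2 * (a * d - 1) := by
          rw [hv_def, hv, ← inv_pow]; field_simp
        have hPP2 : P ^ 2 * (P⁻¹) ^ 2 = 1 := by
          rw [← mul_pow, hPP, one_pow]
        linear_combination (P * a) * hu2 - P ^ 2 * hv2 + μ' * hsum' - hprod +
          (P * P⁻¹ + 1 - P * P⁻¹ * a * d) * hPP
      -- bound |u - v|
      have habsuv : ‖u - v‖ ≤ 4 * Cc / (L ^ 4 * Ca ^ 3) := by
        have h5 : ‖u - v‖ * (L ^ 2 * Ca ^ 2)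
            = ‖μ'‖ * ‖P⁻¹ * d - μ'‖ := by
          have e1 := congrArg (‖·‖) hclear
          simp only [norm_mul, norm_pow, hPabs, ← hCa_def] at e1
          linear_combination e1
        have h6 : ‖P⁻¹ * d - μ'‖ ≤ Cc / L := by
          have h3 : ‖P⁻¹ * d - μ'‖ ≤ Cd / L + 4 / (L * Ca) := by
            calc ‖P⁻¹ * d - μ'‖ ≤ ‖P⁻¹ * d‖ + ‖μ'‖ :=
                  norm_sub_le _ _
              _ ≤ Cd / L + 4 / (L * Ca) := by
                  rw [norm_mul, hPiabs]
                  have hh : L⁻¹ * Cd = Cd / L := by ring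
                  rw [hh]
                  exact add_le_add_right hμ' _
          have hCd4 : Cd / L + 4 / (L * Ca) = Cc / L := by
            rw [hCc_def]; field_simp
          rw [← hCd4]; exact h3
        have h7 : ‖μ'‖ * ‖P⁻¹ * d - μ'‖ ≤ (4 / (L * Ca)) * (Cc / L) :=
          mul_le_mul hμ' h6 (norm_nonneg _) (by positivity)
        rw [le_div_iff₀ (by positivity : (0:ℝ) < L ^ 4 * Ca ^ 3)]
        clear_value Cc L Ca Cd
        have h8 : ‖μ'‖ * ‖P⁻¹ * d - μ'‖ * (L ^ 2 * Ca) ≤ 4 * Cc := by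
          calc ‖μ'‖ * ‖P⁻¹ * d - μ'‖ * (L ^ 2 * Ca)
              ≤ (4 / (L * Ca)) * (Cc / L) * (L ^ 2 * Ca) :=
                mul_le_mul_of_nonneg_right h7 (by positivity)
            _ = 4 * Cc := by field_simp
        calc ‖u - v‖ * (L ^ 4 * Ca ^ 3)
            = (‖u - v‖ * (L ^ 2 * Ca ^ 2)) * (L ^ 2 * Ca) := by ring
          _ = ‖μ'‖ * ‖P⁻¹ * d - μ'‖ * (L ^ 2 * Ca) := by rw [h5]
          _ ≤ 4 * Cc := h8
      -- final assembly
      rw [hL4]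
      have h9 : |u.re - v.re| ≤ ‖u - v‖ := by
        have hre : (u - v).re = u.re - v.re := by simp
        rw [← hre]; exact Complex.abs_re_le_norm _
      have h10 : |Real.log (‖μ‖) - ((n:ℝ) * Real.log r + Real.log Ca + v.re)|
          ≤ ‖u‖ ^ 2 + ‖u - v‖ := by
        have hsplit : Real.log (‖μ‖) - ((n:ℝ) * Real.log r + Real.log Ca + v.re)
            = (Real.log (‖1 + u‖) - u.re) + (u.re - v.re) := by
          rw [hlogμ]; ring
        rw [hsplit]
        calc |(Real.log (‖1 + u‖) - u.re) + (u.re - v.re)|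
            ≤ |Real.log (‖1 + u‖) - u.re| + |u.re - v.re| := abs_add_le _ _
          _ ≤ ‖u‖ ^ 2 + ‖u - v‖ := add_le_add E1 h9
      have h11 : ‖u‖ ^ 2 ≤ Cc ^ 2 / Ca ^ 2 * (L ^ 4)⁻¹ := by
        calc ‖u‖ ^ 2 ≤ (Cc / (L ^ 2 * Ca)) ^ 2 :=
              pow_le_pow_left₀ (norm_nonneg u) habs_u 2
          _ = Cc ^ 2 / Ca ^ 2 * (L ^ 4)⁻¹ := by
            clear_value Cc L Ca
            field_simp
      have h12 : ‖u - v‖ ≤ 4 * Cc / Ca ^ 3 * (L ^ 4)⁻¹ := by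
        calc ‖u - v‖ ≤ 4 * Cc / (L ^ 4 * Ca ^ 3) := habsuv
          _ = 4 * Cc / Ca ^ 3 * (L ^ 4)⁻¹ := by clear_value Cc L Ca; field_simp
      have hpos4 : (0:ℝ) < (L ^ 4)⁻¹ := by positivity
      calc |Real.log (‖μ‖) - ((n:ℝ) * Real.log r + Real.log Ca + v.re)|
          ≤ ‖u‖ ^ 2 + ‖u - v‖ := h10
        _ ≤ Cc ^ 2 / Ca ^ 2 * (L ^ 4)⁻¹ + 4 * Cc / Ca ^ 3 * (L ^ 4)⁻¹ := add_le_add h11 h12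
        _ ≤ (Cc ^ 2 / Ca ^ 2 + 4 * Cc / Ca ^ 3 + 1) * (L ^ 4)⁻¹ := by
            clear_value Cc L Ca
            nlinarith [hpos4]
  rcases le_total (‖(t - s)/2‖) (‖(t + s)/2‖) with h | h
  · exact key ((t+s)/2) ((t-s)/2) (by ring) (by linear_combination (-(1:ℂ)/4) * hs) h
  · exact key ((t-s)/2) ((t+s)/2) (by ring) (by linear_combination (-(1:ℂ)/4) * hs) h
end

section
/- Let λ ∈ ℂ with |λ| > 1 and λ² ∈ ℝ, let a, d ∈ ℂ, and let N ∈ ℕ. If a²·λ^{2n} + 2·a·d + d²·λ^{−2n} is a real number for every n ≥ N, then a², a·d, and d² are all real. -/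
theorem stmt10 (lam : ℂ) (hlam : 1 < ‖lam‖)
    (hlamSqReal : ∃ r : ℝ, lam ^ 2 = (r : ℂ))
    (a d : ℂ) (N : ℕ)
    (h : ∀ n : ℕ, N ≤ n → ∃ t : ℝ,
      a ^ 2 * lam ^ (2 * (n : ℤ)) + 2 * (a * d) + d ^ 2 * lam ^ (-(2 * (n : ℤ))) = (t : ℂ)) :
    (∃ r : ℝ, a ^ 2 = (r : ℂ)) ∧ (∃ r : ℝ, a * d = (r : ℂ)) ∧ (∃ r : ℝ, d ^ 2 = (r : ℂ)) := by
  obtain ⟨μ, hμ⟩ := hlamSqReal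
  have hμabs : 1 < |μ| := by
    have h1 : ‖lam ^ 2‖ = |μ| := by rw [hμ, Complex.norm_real, Real.norm_eq_abs]
    rw [norm_pow] at h1
    nlinarith [norm_nonneg lam]
  have hμ0 : μ ≠ 0 := by
    intro h0; rw [h0] at hμabs; simp at hμabs; linarith
  -- powers of lam in terms of μ
  have hpow : ∀ n : ℕ, lam ^ (2 * (n : ℤ)) = ((μ ^ n : ℝ) : ℂ) := by
    intro n
    have h2 : lam ^ (2 : ℤ) = ((μ : ℝ) : ℂ) := by
      rw [show (2 : ℤ) = ((2 : ℕ) : ℤ) from rfl, zpow_natCast, hμ]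
    rw [zpow_mul, h2, zpow_natCast]
    push_cast; ring
  set x := (a ^ 2).im with hxdef
  set y := (a * d).im with hydef
  set z := (d ^ 2).im with hzdef
  have key : ∀ n : ℕ, N ≤ n → x * μ ^ n * μ ^ n + 2 * y * μ ^ n + z = 0 := by
    intro n hn
    obtain ⟨t, ht⟩ := h n hn
    rw [hpow n, show (-(2 * (n : ℤ))) = -(2 * (n : ℤ)) from rfl, zpow_neg, hpow n] at ht
    have him := congrArg Complex.im ht
    have hne : (μ ^ n : ℝ) ≠ 0 := pow_ne_zero _ hμ0
    have hne' : ((μ ^ n : ℝ) : ℂ) ≠ 0 := by exact_mod_cast hne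
    rw [show ((μ ^ n : ℝ) : ℂ)⁻¹ = (((μ ^ n)⁻¹ : ℝ) : ℂ) by push_cast; ring] at him
    simp only [Complex.add_im, Complex.mul_im, Complex.ofReal_im, Complex.ofReal_re,
      mul_zero, zero_mul, add_zero, zero_add, Complex.mul_re] at him
    have h2re : (2 : ℂ).re = 2 := by norm_num
    have h2im : (2 : ℂ).im = 0 := by norm_num
    rw [h2re, h2im] at him
    have him' : x * μ ^ n + 2 * y + z * (μ ^ n)⁻¹ = 0 := by
      rw [hxdef, hydef, hzdef, Complex.mul_im]; linarith [him]
    field_simp at him'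
    linear_combination him'
  have E0 := key N (le_refl N)
  have E1 := key (N + 1) (by omega)
  have E2 := key (N + 2) (by omega)
  set u := μ ^ N with hudef
  have hu : u ≠ 0 := pow_ne_zero _ hμ0
  rw [pow_succ] at E1
  rw [show N + 2 = (N + 1) + 1 from rfl, pow_succ, pow_succ] at E2
  have hsq : 1 < μ ^ 2 := by nlinarith [sq_abs μ]
  have hsm : 0 < μ ^ 2 - μ := by
    nlinarith [le_abs_self μ, neg_abs_le μ, sq_abs μ]
  have hx : x = 0 := by
    have h1 : x * (u ^ 2 * ((μ ^ 2 - 1) * (μ ^ 2 - μ))) = 0 := by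
      linear_combination E2 - (1 + μ) * E1 + μ * E0
    have h2 : u ^ 2 * ((μ ^ 2 - 1) * (μ ^ 2 - μ)) ≠ 0 := by
      apply mul_ne_zero (pow_ne_zero _ hu)
      have : 0 < (μ ^ 2 - 1) * (μ ^ 2 - μ) := by nlinarith
      exact ne_of_gt this
    exact (mul_eq_zero.mp h1).resolve_right h2
  have hy : y = 0 := by
    have h1 : y * (u * (μ - 1)) = 0 := by
      linear_combination E1 / 2 - E0 / 2 - (u ^ 2 * (μ ^ 2 - 1) / 2) * hx
    have h2 : u * (μ - 1) ≠ 0 := by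
      apply mul_ne_zero hu
      intro h0
      have : μ = 1 := by linarith
      rw [this] at hμabs; simp at hμabs
    exact (mul_eq_zero.mp h1).resolve_right h2
  have hz : z = 0 := by
    have := E0
    rw [hx, hy] at this
    simpa using this
  refine ⟨⟨(a ^ 2).re, ?_⟩, ⟨(a * d).re, ?_⟩, ⟨(d ^ 2).re, ?_⟩⟩ <;>
    rw [Complex.ext_iff] <;> simp [← hxdef, ← hydef, ← hzdef, hx, hy, hz]
end
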